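/- Let u, v be words with |u| = |v| such that uv is primitive. Then for all ℓ, n ∈ ℕ with n > |uv| + ℓ + 2, we have (uv)^ℓ v (uv)^{n−ℓ−1} ↪ (uv)ⁿ. -/

import Mathlib

/-- `wpow w n` is the word `w` concatenated `n` times (the `n`-th power of `w`). -/
def wpow {α : Type*} (w : List α) (n : ℕ) : List α :=
  (List.replicate n w).flatten

/-- A word `w ∈ Σ⁺` is primitive if it is nonempty and not a proper power `r^k`, `k ≥ 2`. -/
def Primitive {α : Type*} (w : List α) : Prop :=
  w ≠ [] ∧ ∀ (r : List α) (k : ℕ), 2 ≤ k → w ≠ wpow r k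

/-- An embedding of `x` into `y`: a strictly increasing, letter-preserving map of positions. -/
def IsEmbedding {α : Type*} (x y : List α) (f : Fin x.length → Fin y.length) : Prop :=
  StrictMono f ∧ ∀ i, x.get i = y.get (f i)

/-- `x ↪ y`: `x` is a subword of `y` and every embedding of `x` into `y` is terminal,
i.e. maps the last position of `x` to the last position of `y`. -/
def PMaxSub {α : Type*} (x y : List α) : Prop :=
  x.Sublist y ∧ ∀ f : Fin x.length → Fin y.length, IsEmbedding x y f →
    ∀ i : Fin x.length, (i : ℕ) = x.length - 1 → (f i : ℕ) = y.length - 1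

theorem wpow_succ {α : Type*} (w : List α) (k : ℕ) : wpow w (k+1) = w ++ wpow w k := by
  simp [wpow, List.replicate_succ]

theorem wpow_length {α : Type*} (w : List α) (k : ℕ) : (wpow w k).length = k * w.length := by
  induction k with
  | zero => simp [wpow]
  | succ k ih => rw [wpow_succ]; simp [ih]; ring

theorem wpow_add {α : Type*} (w : List α) (a b : ℕ) : wpow w (a+b) = wpow w a ++ wpow w b := by
  induction a with
  | zero => simp [wpow]
  | succ a ih => rw [Nat.succ_add, wpow_succ, ih, wpow_succ, List.append_assoc]

theorem wpow_one {α : Type*} (w : List α) : wpow w 1 = w := by simp [wpow]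

theorem wpow_getElem {α : Type*} (w : List α) (hL : 0 < w.length) (k i : ℕ)
    (h1 : i < (wpow w k).length) (h2 : i % w.length < w.length) :
    (wpow w k)[i]'h1 = w[i % w.length]'h2 := by
  induction k generalizing i with
  | zero => simp [wpow] at h1
  | succ k ih =>
    have h1' : i < (w ++ wpow w k).length := by rw [← wpow_succ]; exact h1
    simp only [wpow_succ] at h1 ⊢
    by_cases hi : i < w.length
    · rw [List.getElem_append_left hi]
      simp [Nat.mod_eq_of_lt hi]
    · push_neg at hi
      rw [List.getElem_append_right hi]
      have hb : i - w.length < (wpow w k).length := by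
        simp only [List.length_append] at h1; omega
      have := ih (i - w.length) hb (Nat.mod_lt _ hL)
      rw [this]
      simp [Nat.mod_eq_sub_mod hi]

theorem comm_pow {α : Type*} : ∀ (nn : ℕ) (a b : List α), a.length + b.length ≤ nn →
    a ++ b = b ++ a → ∃ r i j, a = wpow r i ∧ b = wpow r j := by
  intro nn
  induction nn with
  | zero =>
    intro a b hl _
    have ha : a = [] := List.length_eq_zero_iff.mp (by omega)
    have hb : b = [] := List.length_eq_zero_iff.mp (by omega)
    exact ⟨[], 0, 0, by simp [ha, wpow], by simp [hb, wpow]⟩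
  | succ nn ih =>
    intro a b hl hcomm
    rcases eq_or_ne a [] with ha | ha
    · exact ⟨b, 0, 1, by simp [ha, wpow], (wpow_one b).symm⟩
    rcases eq_or_ne b [] with hb | hb
    · exact ⟨a, 1, 0, (wpow_one a).symm, by simp [hb, wpow]⟩
    rcases le_total a.length b.length with hab | hab
    · have hpre : b.take a.length = a := by
        have h1 : (a ++ b).take a.length = a := by simp
        rw [hcomm] at h1
        rwa [List.take_append_of_le_length hab] at h1
      set c := b.drop a.length with hc
      have hbc : b = a ++ c := by rw [← hpre, hc]; simp
      have hcomm2 : a ++ c = c ++ a := by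
        have : a ++ (a ++ c) = (a ++ c) ++ a := by rw [← hbc]; exact hcomm
        rw [List.append_assoc] at this
        exact List.append_cancel_left this
      have hlen2 : a.length + c.length ≤ nn := by
        have h1 : 0 < a.length := List.length_pos_iff.mpr ha
        have h2 : b.length = a.length + c.length := by rw [hbc]; simp
        omega
      obtain ⟨r, i, j, hai, hcj⟩ := ih a c hlen2 hcomm2
      exact ⟨r, i, i + j, hai, by rw [hbc, hai, hcj, ← wpow_add]⟩
    · have hpre : a.take b.length = b := by
        have h1 : (b ++ a).take b.length = b := by simp
        rw [← hcomm] at h1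
        rwa [List.take_append_of_le_length hab] at h1
      set c := a.drop b.length with hc
      have hbc : a = b ++ c := by rw [← hpre, hc]; simp
      have hcomm2 : b ++ c = c ++ b := by
        have : b ++ (b ++ c) = (b ++ c) ++ b := by rw [← hbc]; exact hcomm.symm
        rw [List.append_assoc] at this
        exact List.append_cancel_left this
      have hlen2 : b.length + c.length ≤ nn := by
        have h1 : 0 < b.length := List.length_pos_iff.mpr hb
        have h2 : a.length = b.length + c.length := by rw [hbc]; simp
        omega
      obtain ⟨r, i, j, hbi, hcj⟩ := ih b c hlen2 hcomm2
      exact ⟨r, i + j, i, by rw [hbc, hbi, hcj, ← wpow_add], hbi⟩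

theorem no_rotation {α : Type*} {w : List α} (hprim : Primitive w) (t : ℕ)
    (ht0 : 0 < t) (htL : t < w.length)
    (hrot : ∀ p, (hp : p < w.length) → (hq : (p + t) % w.length < w.length) →
      w[p] = w[(p + t) % w.length]'hq) : False := by
  set L := w.length with hLdef
  have hL : 0 < L := by omega
  set a := w.take t with hadef
  set b := w.drop t with hbdef
  have hab : a ++ b = w := List.take_append_drop t w
  have hla : a.length = t := by rw [hadef]; simp; omega
  have hlb : b.length = L - t := by rw [hbdef]; simp [hLdef]
  have hba : b ++ a = w := by
    apply List.ext_getElem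
    · simp [hla, hlb]; omega
    · intro p hp hp'
      by_cases hcase : p < L - t
      · rw [List.getElem_append_left (by omega : p < b.length)]
        have h1 : b[p]'(by omega) = w[t + p]'(by omega) := by simp [hbdef]
        rw [h1]
        have h2 := hrot p (by omega) (Nat.mod_lt _ hL)
        have h3 : (p + t) % L = t + p := by
          rw [Nat.mod_eq_of_lt (by omega)]; omega
        rw [h2]; congr 1; rw [← hLdef, h3]
      · push_neg at hcase
        rw [List.getElem_append_right (by omega : b.length ≤ p)]
        have h1 : a[p - b.length]'(by simp [hla, hlb]; omega) = w[p - (L - t)]'(by omega) := by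
          simp [hadef, hlb]
        rw [h1]
        have h2 := hrot p (by omega) (Nat.mod_lt _ hL)
        have h3 : (p + t) % L = p - (L - t) := by
          have : p + t - L < L := by omega
          rw [Nat.mod_eq_sub_mod (by omega), Nat.mod_eq_of_lt this]
          omega
        rw [h2]; congr 1; rw [← hLdef, h3]
  have hcomm : a ++ b = b ++ a := by rw [hab, hba]
  obtain ⟨r, i, j, hai, hbj⟩ := comm_pow (a.length + b.length) a b le_rfl hcomm
  have hane : a ≠ [] := by intro h; rw [h] at hla; simp at hla; omega
  have hbne : b ≠ [] := by intro h; rw [h] at hlb; simp at hlb; omega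
  have hi : 1 ≤ i := by
    rcases Nat.eq_zero_or_pos i with h | h
    · rw [h] at hai; simp [wpow] at hai; exact absurd hai hane
    · exact h
  have hj : 1 ≤ j := by
    rcases Nat.eq_zero_or_pos j with h | h
    · rw [h] at hbj; simp [wpow] at hbj; exact absurd hbj hbne
    · exact h
  have hw : w = wpow r (i + j) := by
    rw [← hab, hai, hbj, ← wpow_add]
  exact hprim.2 r (i + j) (by omega) hw
theorem getElem_congr_idx' {α : Type*} {l : List α} {i j : ℕ} {hi : i < l.length}
    {hj : j < l.length} (h : i = j) : l[i]'hi = l[j]'hj := by subst h; rfl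

theorem getElem_congr_l {α : Type*} {l l' : List α} {i : ℕ} {hi : i < l.length}
    {hi' : i < l'.length} (h : l = l') : l[i]'hi = l'[i]'hi' := by subst h; rfl

theorem mid_v_pmaxSub_pow {A : Type*} (u v : List A) (hlen : u.length = v.length)
    (hprim : Primitive (u ++ v)) :
    ∀ ℓ n : ℕ, n > (u ++ v).length + ℓ + 2 →
      PMaxSub (wpow (u ++ v) ℓ ++ v ++ wpow (u ++ v) (n - ℓ - 1)) (wpow (u ++ v) n) := by
  intro ℓ n hn
  set w := u ++ v with hwdef
  have hm : 0 < v.length := by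
    rcases Nat.eq_zero_or_pos v.length with h | h
    · exfalso
      apply hprim.1
      have hu : u = [] := List.length_eq_zero_iff.mp (by omega)
      have hv : v = [] := List.length_eq_zero_iff.mp h
      rw [hwdef, hu, hv]; simp
    · exact h
  set m := v.length with hmdef
  set L := w.length with hLdef
  have hLm : L = 2 * m := by rw [hLdef, hwdef, List.length_append, hlen]; omega
  have hL : 0 < L := by omega
  have hdecomp : wpow w n = (wpow w ℓ ++ w) ++ wpow w (n - ℓ - 1) := by
    conv_lhs => rw [show n = ℓ + 1 + (n - ℓ - 1) by omega]
    rw [wpow_add, wpow_add, wpow_one]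
  constructor
  · rw [hdecomp]
    have hvw : v.Sublist w := by rw [hwdef]; exact List.sublist_append_right u v
    exact ((List.Sublist.refl _).append hvw).append (List.Sublist.refl _)
  · set X := wpow w ℓ ++ v ++ wpow w (n - ℓ - 1) with hXdef
    set Y := wpow w n with hYdef
    set Astart := ℓ * L + m with hAdef
    rintro f ⟨hmono, hget⟩ i hi
    have hxlen : X.length = Astart + (n - ℓ - 1) * L := by
      rw [hXdef]
      simp only [List.length_append, wpow_length, ← hLdef, ← hmdef, hAdef]
    have hylen : Y.length = n * L := by rw [hYdef, wpow_length, ← hLdef]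
    have hmul : ℓ * L + L + (n - ℓ - 1) * L = n * L := by
      have h : ℓ + 1 + (n - ℓ - 1) = n := by omega
      calc ℓ * L + L + (n - ℓ - 1) * L = (ℓ + 1 + (n - ℓ - 1)) * L := by ring
        _ = n * L := by rw [h]
    set F : ℕ → ℕ := fun jv => if h : jv < X.length then (f ⟨jv, h⟩ : ℕ) else 0 with hFdef
    have hFval : ∀ jv (h : jv < X.length), F jv = (f ⟨jv, h⟩ : ℕ) := by
      intro jv h; rw [hFdef]; exact dif_pos h
    have hFlt : ∀ jv, (h : jv < X.length) → F jv < Y.length := by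
      intro jv h; rw [hFval jv h]; exact (f ⟨jv, h⟩).isLt
    have hfadd : ∀ d jv, (h : jv + d < X.length) → F jv + d ≤ F (jv + d) := by
      intro d
      induction d with
      | zero => intro jv h; simp
      | succ p ihp =>
        intro jv h
        have h3 : jv + p < X.length := by omega
        have h4 := ihp jv h3
        have h5 : f ⟨jv + p, h3⟩ < f ⟨jv + (p+1), h⟩ :=
          hmono (Fin.mk_lt_mk.mpr (by omega))
        rw [Fin.lt_def] at h5
        rw [hFval (jv + p) h3] at h4
        rw [hFval (jv + (p+1)) h]
        omega
    have hfge : ∀ jv, (h : jv < X.length) → jv ≤ F jv := by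
      intro jv h
      have h1 := hfadd jv 0 (by omega)
      rw [Nat.zero_add] at h1
      omega
    by_contra hne
    have hY1 : 0 < Y.length := by
      rw [hylen]; exact Nat.mul_pos (by omega) hL
    have hilt := (f i).isLt
    have hFi : F (X.length - 1) = (f i : ℕ) := by
      have hxx : X.length - 1 < X.length := by omega
      rw [hFval (X.length - 1) hxx]
      have he : (⟨X.length - 1, hxx⟩ : Fin X.length) = i :=
        Fin.ext (by show X.length - 1 = (i : ℕ); omega)
      rw [he]
    have hflast : F (X.length - 1) ≤ n * L - 2 := by
      rw [hFi]
      have h1 : (f i : ℕ) < n * L := by rw [← hylen]; exact (f i).isLt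
      have h2 : (f i : ℕ) ≠ n * L - 1 := by rw [← hylen]; exact hne
      omega
    have hsbd : ∀ jv, (h : jv < X.length) → F jv ≤ jv + (m - 1) := by
      intro jv h
      have h4 := hfadd ((X.length - 1) - jv) jv (by omega)
      have he : jv + ((X.length - 1) - jv) = X.length - 1 := by omega
      rw [he] at h4
      omega
    have hshift_mono : ∀ j1 j2, j1 ≤ j2 → (h2 : j2 < X.length) → F j1 - j1 ≤ F j2 - j2 := by
      intro j1 j2 hle h2
      have h4 := hfadd (j2 - j1) j1 (by omega)
      have he : j1 + (j2 - j1) = j2 := by omega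
      rw [he] at h4
      have := hfge j1 (by omega)
      omega
    have hAbound : Astart + m * L + L ≤ X.length := by
      have h1 : (m + 1) * L ≤ (n - ℓ - 1) * L := Nat.mul_le_mul_right L (by omega)
      have h2 : (m + 1) * L = m * L + L := by ring
      omega
    have hvalid : ∀ t, t ≤ m → Astart + t * L + L ≤ X.length := by
      intro t ht
      have : t * L ≤ m * L := Nat.mul_le_mul_right L ht
      omega
    have hstep : ∃ t, t < m ∧
        F (Astart + t * L) - (Astart + t * L) = F (Astart + (t+1) * L) - (Astart + (t+1) * L) := by
      by_contra hc
      push_neg at hc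
      have hlt : ∀ t, t < m →
          F (Astart + t * L) - (Astart + t * L) < F (Astart + (t+1) * L) - (Astart + (t+1) * L) := by
        intro t ht
        have hv1 := hvalid (t+1) (by omega)
        have hmul1 : (t+1) * L = t * L + L := by ring
        refine lt_of_le_of_ne ?_ (hc t ht)
        exact hshift_mono (Astart + t * L) (Astart + (t+1) * L) (by omega) (by omega)
      have hgrow : ∀ t, t ≤ m → t ≤ F (Astart + t * L) - (Astart + t * L) := by
        intro t
        induction t with
        | zero => intro _; exact Nat.zero_le _
        | succ p ihp =>
          intro h
          have h1 := ihp (by omega)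
          have h2 := hlt p (by omega)
          omega
      have h1 := hgrow m le_rfl
      have hv := hvalid m le_rfl
      have h2 := hsbd (Astart + m * L) (by omega)
      have h3 := hfge (Astart + m * L) (by omega)
      omega
    obtain ⟨t, ht, hteq⟩ := hstep
    have hv := hvalid t (by omega)
    have hv1 := hvalid (t+1) (by omega)
    have hmul1 : (t+1) * L = t * L + L := by ring
    set c := F (Astart + t * L) - (Astart + t * L) with hcdef
    have hcm : c < m := by
      have h2 := hsbd (Astart + t * L) (by omega)
      have h3 := hfge (Astart + t * L) (by omega)
      omega
    have hconst : ∀ q, q ≤ L → F (Astart + t * L + q) = Astart + t * L + q + c := by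
      intro q hq
      have hlow := hshift_mono (Astart + t * L) (Astart + t * L + q) (by omega) (by omega)
      have hhigh := hshift_mono (Astart + t * L + q) (Astart + (t+1) * L) (by omega) (by omega)
      have hg1 := hfge (Astart + t * L) (by omega)
      have hg2 := hfge (Astart + t * L + q) (by omega)
      have hg3 := hfge (Astart + (t+1) * L) (by omega)
      omega
    have hAlen : (wpow w ℓ ++ v).length = Astart := by
      simp only [List.length_append, wpow_length, ← hLdef, ← hmdef, hAdef]
    have hgetF : ∀ jv (h : jv < X.length) (h2 : F jv < Y.length),
        X[jv]'h = Y[F jv]'h2 := by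
      intro jv h h2
      have he : (⟨F jv, h2⟩ : Fin Y.length) = f ⟨jv, h⟩ := Fin.ext (hFval jv h)
      calc X[jv]'h = X.get ⟨jv, h⟩ := (List.get_eq_getElem (l := X) (i := ⟨jv, h⟩)).symm
        _ = Y.get (f ⟨jv, h⟩) := hget _
        _ = Y.get ⟨F jv, h2⟩ := by rw [he]
        _ = Y[F jv]'h2 := List.get_eq_getElem
    apply no_rotation hprim (m + c) (by omega) (show m + c < w.length by rw [← hLdef]; omega)
    intro p hp hq
    have hpL : p < L := by rw [hLdef]; exact hp
    have hj : Astart + t * L + p < X.length := by omega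
    have hFj : F (Astart + t * L + p) = Astart + t * L + p + c := hconst p (by omega)
    have hb1 : t * L + p < (n - ℓ - 1) * L := by omega
    have hx1 : X[Astart + t * L + p]'hj = w[p]'hp := by
      have hj' : Astart + t * L + p < (wpow w ℓ ++ v ++ wpow w (n - ℓ - 1)).length := by
        rw [← hXdef]; exact hj
      rw [getElem_congr_l hXdef (hi' := hj')]
      rw [List.getElem_append_right (by rw [hAlen]; omega)]
      have he : Astart + t * L + p - (wpow w ℓ ++ v).length = t * L + p := by
        rw [hAlen]; omega
      rw [getElem_congr_idx' he (hj := by rw [wpow_length, ← hLdef]; exact hb1)]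
      rw [wpow_getElem w hL (n - ℓ - 1) (t * L + p) _ (Nat.mod_lt _ hL)]
      apply getElem_congr_idx'
      rw [← hLdef, Nat.mul_comm t L, Nat.mul_add_mod, Nat.mod_eq_of_lt hpL]
    have hFy : Astart + t * L + p + c < Y.length := by rw [← hFj]; exact hFlt _ hj
    have hy1 : Y[F (Astart + t * L + p)]'(hFlt _ hj) = w[(p + (m + c)) % w.length]'hq := by
      have hmod : (Astart + t * L + p + c) % w.length = (p + (m + c)) % w.length := by
        have he : Astart + t * L + p + c = w.length * (ℓ + t) + (p + (m + c)) := by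
          rw [hAdef, hLdef]; ring
        rw [he, Nat.mul_add_mod]
      have hFy' : Astart + t * L + p + c < (wpow w n).length := by rw [← hYdef]; exact hFy
      calc Y[F (Astart + t * L + p)]'(hFlt _ hj)
          = Y[Astart + t * L + p + c]'hFy := getElem_congr_idx' hFj
        _ = (wpow w n)[Astart + t * L + p + c]'hFy' := getElem_congr_l hYdef
        _ = w[(Astart + t * L + p + c) % w.length]'(Nat.mod_lt _ (by rw [← hLdef]; exact hL)) :=
            wpow_getElem w (by rw [← hLdef]; exact hL) n _ _ _
        _ = w[(p + (m + c)) % w.length]'hq := getElem_congr_idx' hmod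
    rw [← hx1, ← hy1]
    exact hgetF _ hj (hFlt _ hj)
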